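/- For every α ∈ (0, π/4), the three-dimensional Lebesgue measure (volume) of the body B_α equals π·tan α·(tan(2α) + (tan α)/3). -/

import Mathlib

open Real MeasureTheory


lemma integral_poly2 (a b c A B : ℝ) :
    ∫ z in A..B, (a + b*z + c*z^2) =
      (a*B + b/2*B^2 + c/3*B^3) - (a*A + b/2*A^2 + c/3*A^3) := by
  have h : ∀ z ∈ Set.uIcc A B,
      HasDerivAt (fun z : ℝ => a*z + b/2*z^2 + c/3*z^3) (a + b*z + c*z^2) z := by
    intro z _
    have h1 : HasDerivAt (fun z : ℝ => a*z) (a*1) z := (hasDerivAt_id z).const_mul a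
    have h2 : HasDerivAt (fun z : ℝ => b/2*z^2) (b/2*(2*z^(2-1))) z :=
      (hasDerivAt_pow 2 z).const_mul (b/2)
    have h3 : HasDerivAt (fun z : ℝ => c/3*z^3) (c/3*(3*z^(3-1))) z :=
      (hasDerivAt_pow 3 z).const_mul (c/3)
    have := (h1.add h2).add h3
    exact this.congr_deriv (by norm_num; ring)
  rw [intervalIntegral.integral_eq_sub_of_hasDerivAt h
    ((by fun_prop : Continuous fun z : ℝ => a + b*z + c*z^2).intervalIntegrable _ _)]

lemma volume_annulus (c R : ℝ) (hc : 0 ≤ c) (hcR : c ≤ R) :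
    volume {p : ℝ × ℝ | c ≤ Real.sqrt (p.1^2 + p.2^2) ∧ Real.sqrt (p.1^2 + p.2^2) ≤ R} =
      ENNReal.ofReal (π * (R^2 - c^2)) := by
  have e := Complex.volume_preserving_equiv_real_prod
  have hmeas : MeasurableSet {p : ℝ × ℝ | c ≤ Real.sqrt (p.1^2 + p.2^2) ∧
      Real.sqrt (p.1^2 + p.2^2) ≤ R} := by
    have hm : Measurable fun p : ℝ × ℝ => Real.sqrt (p.1^2 + p.2^2) := by fun_prop
    exact (measurableSet_le measurable_const hm).inter (measurableSet_le hm measurable_const)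
  rw [← e.measure_preimage hmeas.nullMeasurableSet]
  have hset : Complex.measurableEquivRealProd ⁻¹'
      {p : ℝ × ℝ | c ≤ Real.sqrt (p.1^2 + p.2^2) ∧ Real.sqrt (p.1^2 + p.2^2) ≤ R}
      = Metric.closedBall 0 R \ Metric.ball 0 c := by
    ext z
    have habs : Real.sqrt (z.re^2 + z.im^2) = ‖z‖ := by
      rw [Complex.norm_def, Complex.normSq_apply]; ring_nf
    simp only [Set.mem_preimage, Complex.measurableEquivRealProd_apply, Set.mem_setOf_eq,
      Set.mem_diff, Metric.mem_closedBall, Metric.mem_ball, dist_zero_right,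
      habs, not_lt]
    tauto
  rw [hset, measure_diff (Metric.ball_subset_closedBall.trans (Metric.closedBall_subset_closedBall hcR)) measurableSet_ball.nullMeasurableSet
    (by rw [Complex.volume_ball]; exact ENNReal.mul_ne_top (by simp) (by simp)),
    Complex.volume_closedBall, Complex.volume_ball]
  rw [← ENNReal.ofReal_pow (le_trans hc hcR), ← ENNReal.ofReal_pow hc,
    ← ENNReal.ofReal_coe_nnreal, NNReal.coe_real_pi,
    ← ENNReal.ofReal_mul (by positivity), ← ENNReal.ofReal_mul (by positivity),
    ← ENNReal.ofReal_sub _ (by positivity)]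
  ring_nf

/-- The zero-resistance body of revolution `B_α`: for `α ∈ (0, π/4)`, with
`L(α) = (tan 2α + tan α)/2` and `ℓ(α) = (tan 2α − tan α)/2`, it is the set of points
`(x, y, z)` with `|z| ≤ 1` and `ℓ(α) + tan α * |z| ≤ √(x² + y²) ≤ L(α)`. -/
def zeroResistanceBody (α : ℝ) : Set (ℝ × ℝ × ℝ) :=
  {p : ℝ × ℝ × ℝ | |p.2.2| ≤ 1 ∧
    (Real.tan (2 * α) - Real.tan α) / 2 + Real.tan α * |p.2.2| ≤
      Real.sqrt (p.1 ^ 2 + p.2.1 ^ 2) ∧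
    Real.sqrt (p.1 ^ 2 + p.2.1 ^ 2) ≤ (Real.tan (2 * α) + Real.tan α) / 2}

/-- For every `α ∈ (0, π/4)`, the volume of `B_α` equals `π·tan α·(tan 2α + tan α / 3)`. -/
theorem volume_zeroResistanceBody (α : ℝ) (hα : α ∈ Set.Ioo 0 (π / 4)) :
    volume (zeroResistanceBody α) =
      ENNReal.ofReal (π * Real.tan α * (Real.tan (2 * α) + Real.tan α / 3)) := by
  obtain ⟨hα0, hα4⟩ := hα
  have hπ := Real.pi_pos
  have ht : 0 < Real.tan α := Real.tan_pos_of_pos_of_lt_pi_div_two hα0 (by linarith)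
  have htT : Real.tan α < Real.tan (2 * α) :=
    Real.tan_lt_tan_of_nonneg_of_lt_pi_div_two hα0.le (by linarith) (by linarith)
  set t := Real.tan α with hts
  set T := Real.tan (2 * α) with hTs
  have hsqm : Measurable fun w : ℝ × ℝ => Real.sqrt (w.1 ^ 2 + w.2 ^ 2) := by fun_prop
  have hBmeas : MeasurableSet (zeroResistanceBody α) := by
    have hf : Measurable fun p : ℝ × ℝ × ℝ => Real.sqrt (p.1 ^ 2 + p.2.1 ^ 2) := by fun_prop
    have hg : Measurable fun p : ℝ × ℝ × ℝ => |p.2.2| := by fun_prop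
    exact (measurableSet_le hg measurable_const).inter
      ((measurableSet_le (by fun_prop) hf).inter (measurableSet_le hf measurable_const))
  have hmp : MeasurePreserving
      (fun q : ℝ × (ℝ × ℝ) => ((q.2.1, q.2.2, q.1) : ℝ × ℝ × ℝ)) volume volume :=
    (measurePreserving_prodAssoc volume volume volume).comp Measure.measurePreserving_swap
  rw [← hmp.measure_preimage hBmeas.nullMeasurableSet]
  have hpre : MeasurableSet
      ((fun q : ℝ × (ℝ × ℝ) => ((q.2.1, q.2.2, q.1) : ℝ × ℝ × ℝ)) ⁻¹' zeroResistanceBody α) :=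
    hBmeas.preimage (by fun_prop)
  rw [Measure.volume_eq_prod, Measure.prod_apply hpre]
  have key : ∀ z : ℝ, (volume : Measure (ℝ × ℝ))
      (Prod.mk z ⁻¹' ((fun q : ℝ × (ℝ × ℝ) =>
        ((q.2.1, q.2.2, q.1) : ℝ × ℝ × ℝ)) ⁻¹' zeroResistanceBody α)) =
      (Set.Icc (-1 : ℝ) 1).indicator
        (fun z => ENNReal.ofReal (π * (((T + t)/2)^2 - ((T - t)/2 + t * |z|)^2))) z := by
    intro z
    by_cases hz : |z| ≤ 1
    · rw [Set.indicator_of_mem (by simpa [Set.mem_Icc] using abs_le.mp hz)]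
      have hset : Prod.mk z ⁻¹' ((fun q : ℝ × (ℝ × ℝ) =>
          ((q.2.1, q.2.2, q.1) : ℝ × ℝ × ℝ)) ⁻¹' zeroResistanceBody α) =
          {w : ℝ × ℝ | (T - t)/2 + t * |z| ≤ Real.sqrt (w.1 ^ 2 + w.2 ^ 2) ∧
            Real.sqrt (w.1 ^ 2 + w.2 ^ 2) ≤ (T + t)/2} := by
        ext w
        simp [zeroResistanceBody, hz, ← hts, ← hTs]
      rw [hset]
      exact volume_annulus _ _
        (by nlinarith [abs_nonneg z, mul_nonneg ht.le (abs_nonneg z)])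
        (by nlinarith [abs_nonneg z, mul_le_mul_of_nonneg_left hz ht.le])
    · rw [Set.indicator_of_notMem (by simpa [Set.mem_Icc, abs_le] using hz)]
      have hset : Prod.mk z ⁻¹' ((fun q : ℝ × (ℝ × ℝ) =>
          ((q.2.1, q.2.2, q.1) : ℝ × ℝ × ℝ)) ⁻¹' zeroResistanceBody α) = ∅ := by
        ext w
        simp [zeroResistanceBody, hz]
      rw [hset, measure_empty]
  rw [lintegral_congr key, lintegral_indicator measurableSet_Icc]
  have hfi : IntegrableOn (fun z : ℝ => π * (((T + t)/2)^2 - ((T - t)/2 + t * |z|)^2))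
      (Set.Icc (-1 : ℝ) 1) volume :=
    (Continuous.continuousOn (by fun_prop)).integrableOn_Icc
  have hnn : 0 ≤ᵐ[volume.restrict (Set.Icc (-1 : ℝ) 1)]
      fun z : ℝ => π * (((T + t)/2)^2 - ((T - t)/2 + t * |z|)^2) := by
    filter_upwards [ae_restrict_mem measurableSet_Icc] with z hz
    have hz1 : |z| ≤ 1 := abs_le.mpr ⟨hz.1, hz.2⟩
    have h1 : (T - t)/2 + t * |z| ≤ (T + t)/2 := by
      nlinarith [mul_le_mul_of_nonneg_left hz1 ht.le]
    have h0 : (0:ℝ) ≤ (T - t)/2 + t * |z| := by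
      nlinarith [abs_nonneg z, mul_nonneg ht.le (abs_nonneg z)]
    have hsq : ((T - t)/2 + t * |z|)^2 ≤ ((T + t)/2)^2 := by nlinarith
    exact mul_nonneg hπ.le (by linarith)
  rw [← ofReal_integral_eq_lintegral_ofReal hfi hnn]
  congr 1
  rw [MeasureTheory.integral_Icc_eq_integral_Ioc,
    ← intervalIntegral.integral_of_le (by norm_num : (-1:ℝ) ≤ 1)]
  have hc1 : Continuous fun z : ℝ => π * (((T + t)/2)^2 - ((T - t)/2 + t * |z|)^2) := by fun_prop
  rw [← intervalIntegral.integral_add_adjacent_intervals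
    (hc1.intervalIntegrable (-1) 0) (hc1.intervalIntegrable 0 1)]
  have e1 : (∫ z in (-1:ℝ)..0, π * (((T + t)/2)^2 - ((T - t)/2 + t * |z|)^2)) =
      ∫ z in (-1:ℝ)..0, (π*(((T+t)/2)^2-((T-t)/2)^2) + (π*t*(T-t))*z + (-(π*t^2))*z^2) := by
    apply intervalIntegral.integral_congr
    intro z hz
    rw [Set.uIcc_of_le (by norm_num : (-1:ℝ) ≤ 0)] at hz
    simp only [abs_of_nonpos hz.2]
    ring
  have e2 : (∫ z in (0:ℝ)..1, π * (((T + t)/2)^2 - ((T - t)/2 + t * |z|)^2)) =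
      ∫ z in (0:ℝ)..1, (π*(((T+t)/2)^2-((T-t)/2)^2) + (-(π*t*(T-t)))*z + (-(π*t^2))*z^2) := by
    apply intervalIntegral.integral_congr
    intro z hz
    rw [Set.uIcc_of_le (by norm_num : (0:ℝ) ≤ 1)] at hz
    simp only [abs_of_nonneg hz.1]
    ring
  rw [e1, e2, integral_poly2, integral_poly2]
  ring
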